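/- arXiv:1510.06321 — 2 statements merged into one kernel-verified Lean document; each statement's English description precedes it below -/
import Mathlib

section
/- Weak-type bounds for the Paley operator: Let (X, μ) be a σ-finite measure space and φ : X → (0,∞) measurable with M_φ := sup_{s>0} s · μ{x : φ(x) ≥ s} < ∞. Define the measure ν by dν = φ² dμ and the sublinear map T f(x) = |f̂(x)|/φ(x) where f̂ satisfies ‖f̂‖_{L²(μ)} ≤ ‖f‖_{L²} and ‖f̂‖_{L^∞} ≤ ‖f‖_{L¹}. Then T is of weak type (2,2) with constant 1 and of weak type (1,1) with constant ≲ M_φ, with respect to the measure ν on the target. -/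
open MeasureTheory Set
open scoped ENNReal NNReal

private lemma paley_aux {X : Type} [MeasurableSpace X] (μ : Measure X) (φ : X → ℝ)
    (hφm : Measurable φ) (hφpos : ∀ x, 0 < φ x) (Mφ : ℝ≥0∞)
    (hMφ : ∀ s : ℝ, 0 < s → ENNReal.ofReal s * μ {x | s ≤ φ x} ≤ Mφ) (t : ℝ) :
    μ.withDensity (fun x => ENNReal.ofReal (φ x ^ 2)) {x | φ x < t}
      ≤ 2 * Mφ * ENNReal.ofReal t := by
  have hset : MeasurableSet {x | φ x < t} := measurableSet_lt hφm measurable_const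
  rw [withDensity_apply _ hset]
  rcases le_or_gt t 0 with ht | ht
  · have hempty : {x | φ x < t} = (∅ : Set X) := by
      ext x
      simp only [mem_setOf_eq, mem_empty_iff_false, iff_false, not_lt]
      exact ht.trans (hφpos x).le
    rw [hempty]
    simp
  · set g : X → ℝ := fun x => if φ x < t then φ x else 0 with hg
    have hgm : Measurable g :=
      Measurable.ite (measurableSet_lt hφm measurable_const) hφm measurable_const
    have hgnn : ∀ x, 0 ≤ g x := fun x => by
      by_cases h : φ x < t <;> simp [hg, h, (hφpos x).le]
    have key : ∫⁻ x in {x | φ x < t}, ENNReal.ofReal (φ x ^ 2) ∂μ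
        = ∫⁻ x, ENNReal.ofReal (g x ^ (2 : ℝ)) ∂μ := by
      rw [← lintegral_indicator hset _]
      congr 1
      ext x
      by_cases h : φ x < t
      · simp [indicator, h, hg, Real.rpow_two]
      · simp [indicator, h, hg, Real.rpow_two]
    rw [key, lintegral_rpow_eq_lintegral_meas_le_mul μ (ae_of_all _ hgnn)
      hgm.aemeasurable (by norm_num : (0:ℝ) < 2)]
    have hbound : ∫⁻ s in Ioi (0:ℝ), μ {a | s ≤ g a} * ENNReal.ofReal (s ^ ((2:ℝ) - 1))
        ≤ ∫⁻ s in Ioi (0:ℝ), (Ioo (0:ℝ) t).indicator (fun _ => Mφ) s := by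
      apply setLIntegral_mono' measurableSet_Ioi
      intro s hs
      rw [mem_Ioi] at hs
      by_cases hst : s < t
      · have hsub : {a | s ≤ g a} ⊆ {a | s ≤ φ a} := by
          intro a ha
          simp only [mem_setOf_eq, hg] at ha ⊢
          by_cases h : φ a < t
          · simpa [h] using ha
          · simp only [h, if_false] at ha; linarith
        calc μ {a | s ≤ g a} * ENNReal.ofReal (s ^ ((2:ℝ) - 1))
            ≤ μ {a | s ≤ φ a} * ENNReal.ofReal s := by
              norm_num [Real.rpow_one]
              exact mul_le_mul' (measure_mono hsub) le_rfl
          _ ≤ Mφ := by rw [mul_comm]; exact hMφ s hs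
          _ = (Ioo (0:ℝ) t).indicator (fun _ => Mφ) s := by
              exact (Set.indicator_of_mem (⟨hs, hst⟩ : s ∈ Ioo 0 t) (fun _ => Mφ)).symm
      · have hempty : {a | s ≤ g a} = (∅ : Set X) := by
          ext a
          simp only [mem_setOf_eq, mem_empty_iff_false, iff_false, not_le, hg]
          by_cases h : φ a < t
          · simp only [h, if_true]; linarith
          · simp only [h, if_false]; linarith
        simp [hempty]
    calc ENNReal.ofReal 2 *
          ∫⁻ s in Ioi (0:ℝ), μ {a | s ≤ g a} * ENNReal.ofReal (s ^ ((2:ℝ) - 1))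
        ≤ ENNReal.ofReal 2 * ∫⁻ s in Ioi (0:ℝ), (Ioo (0:ℝ) t).indicator (fun _ => Mφ) s :=
          mul_le_mul' le_rfl hbound
      _ = 2 * Mφ * ENNReal.ofReal t := by
          rw [lintegral_indicator measurableSet_Ioo _, Measure.restrict_restrict measurableSet_Ioo,
            Ioo_inter_Ioi, setLIntegral_const]
          simp only [Real.volume_Ioo, sup_idem, sub_zero]
          rw [show ENNReal.ofReal 2 = 2 by norm_num, mul_assoc]
  

private lemma sq_eLpNorm {X : Type} [MeasurableSpace X] (μ : Measure X) (g : X → ℂ) :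
    eLpNorm g 2 μ ^ 2 = ∫⁻ x, (‖g x‖₊ : ℝ≥0∞) ^ 2 ∂μ := by
  rw [eLpNorm_eq_lintegral_rpow_enorm_toReal two_ne_zero ENNReal.ofNat_ne_top]
  have h2 : (2 : ℝ≥0∞).toReal = 2 := by norm_num
  rw [h2, ← ENNReal.rpow_natCast _ 2, ← ENNReal.rpow_mul]
  norm_num
  rfl

/-- Weak-type bounds for the Paley operator: there is an absolute constant `K` such that
for any σ-finite measure spaces `(X, μ)`, `(Y, μY)`, any measurable `φ : X → (0,∞)` with
`M_φ = sup_{s>0} s μ{φ ≥ s} < ∞`, and any "Fourier transform" `hat` satisfying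
`‖hat f‖_{L²(μ)} ≤ ‖f‖_{L²(μY)}` and `‖hat f‖_{L^∞(μ)} ≤ ‖f‖_{L¹(μY)}`, the sublinear
map `T f = |hat f|/φ` is of weak type (2,2) with constant 1 and of weak type (1,1) with
constant `K · M_φ`, with respect to the measure `ν = φ² dμ` on the target. -/
theorem stmt_9 :
    ∃ K : ℝ≥0∞, 0 < K ∧ K ≠ ⊤ ∧
      ∀ (X Y : Type) (mX : MeasurableSpace X) (mY : MeasurableSpace Y)
        (μ : Measure X) (μY : Measure Y), SigmaFinite μ → SigmaFinite μY →
        ∀ φ : X → ℝ, Measurable φ → (∀ x, 0 < φ x) →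
        ∀ Mφ : ℝ≥0∞, Mφ ≠ ⊤ →
          (∀ s : ℝ, 0 < s → ENNReal.ofReal s * μ {x | s ≤ φ x} ≤ Mφ) →
        ∀ hat : (Y → ℂ) → X → ℂ, (∀ f, Measurable (hat f)) →
          (∀ f, eLpNorm (hat f) 2 μ ≤ eLpNorm f 2 μY) →
          (∀ f, eLpNorm (hat f) ∞ μ ≤ eLpNorm f 1 μY) →
        ∀ (f : Y → ℂ) (y : ℝ), 0 < y →
          (μ.withDensity fun x => ENNReal.ofReal (φ x ^ 2))
              {x | y < ‖hat f x‖ / φ x} ≤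
            (eLpNorm f 2 μY / ENNReal.ofReal y) ^ 2 ∧
          (μ.withDensity fun x => ENNReal.ofReal (φ x ^ 2))
              {x | y < ‖hat f x‖ / φ x} ≤
            K * Mφ * eLpNorm f 1 μY / ENNReal.ofReal y := by
  refine ⟨2, by norm_num, by norm_num, ?_⟩
  intro X Y mX mY μ μY hσ hσY φ hφm hφpos Mφ hMφtop hMφ hat hhatm hhat2 hhat1 f y hy
  have hTm : Measurable fun x => ‖hat f x‖ / φ x := (hhatm f).norm.div hφm
  have hS : MeasurableSet {x | y < ‖hat f x‖ / φ x} := measurableSet_lt measurable_const hTm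
  have hoy0 : ENNReal.ofReal y ≠ 0 := (ENNReal.ofReal_pos.mpr hy).ne'
  have hoyt : ENNReal.ofReal y ≠ ⊤ := ENNReal.ofReal_ne_top
  constructor
  · -- weak (2,2)
    rw [div_eq_mul_inv, mul_pow, ← ENNReal.inv_pow, ← div_eq_mul_inv,
      ENNReal.le_div_iff_mul_le (Or.inl (pow_ne_zero 2 hoy0))
        (Or.inl (ENNReal.pow_ne_top hoyt))]
    have hφ2m : Measurable fun x => ENNReal.ofReal (φ x ^ 2) :=
      ENNReal.measurable_ofReal.comp (hφm.pow_const 2)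
    calc (μ.withDensity fun x => ENNReal.ofReal (φ x ^ 2)) {x | y < ‖hat f x‖ / φ x}
          * ENNReal.ofReal y ^ 2
        = ∫⁻ x in {x | y < ‖hat f x‖ / φ x},
            ENNReal.ofReal (φ x ^ 2) * ENNReal.ofReal y ^ 2 ∂μ := by
          rw [withDensity_apply _ hS, lintegral_mul_const _ hφ2m]
      _ ≤ ∫⁻ x in {x | y < ‖hat f x‖ / φ x}, (‖hat f x‖₊ : ℝ≥0∞) ^ 2 ∂μ := by
          apply setLIntegral_mono' hS
          intro x hx
          have h1 : y * φ x < ‖hat f x‖ := (lt_div_iff₀ (hφpos x)).mp hx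
          have h2 : (y * φ x) ^ 2 ≤ ‖hat f x‖ ^ 2 :=
            pow_le_pow_left₀ (mul_nonneg hy.le (hφpos x).le) h1.le 2
          calc ENNReal.ofReal (φ x ^ 2) * ENNReal.ofReal y ^ 2
              = ENNReal.ofReal ((y * φ x) ^ 2) := by
                rw [← ENNReal.ofReal_pow hy.le,
                  ← ENNReal.ofReal_mul (by positivity)]
                congr 1
                ring
            _ ≤ ENNReal.ofReal (‖hat f x‖ ^ 2) := ENNReal.ofReal_le_ofReal h2
            _ = (‖hat f x‖₊ : ℝ≥0∞) ^ 2 := by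
                rw [ENNReal.ofReal_pow (norm_nonneg _), ofReal_norm, enorm_eq_nnnorm]
      _ ≤ ∫⁻ x, (‖hat f x‖₊ : ℝ≥0∞) ^ 2 ∂μ := setLIntegral_le_lintegral _ _
      _ = eLpNorm (hat f) 2 μ ^ 2 := (sq_eLpNorm μ (hat f)).symm
      _ ≤ eLpNorm f 2 μY ^ 2 := pow_le_pow_left' (hhat2 f) 2
  · -- weak (1,1)
    by_cases hAtop : eLpNorm f 1 μY = ⊤
    · by_cases hM0 : Mφ = 0
      · have hμ : μ Set.univ = 0 := by
          have hn : ∀ n : ℕ, μ {x | (1 : ℝ) / (n + 1) ≤ φ x} = 0 := by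
            intro n
            have hpos : (0 : ℝ) < 1 / (n + 1) := by positivity
            have h := hMφ _ hpos
            rw [hM0, nonpos_iff_eq_zero, mul_eq_zero] at h
            rcases h with h | h
            · exact absurd h (ENNReal.ofReal_pos.mpr hpos).ne'
            · exact h
          have hcover : (Set.univ : Set X) ⊆ ⋃ n : ℕ, {x | (1 : ℝ) / (n + 1) ≤ φ x} := by
            intro x _
            obtain ⟨n, hnlt⟩ := exists_nat_one_div_lt (hφpos x)
            exact mem_iUnion.mpr ⟨n, hnlt.le⟩
          refine le_antisymm ((measure_mono hcover).trans ?_) zero_le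
          rw [measure_iUnion_null hn]
        have hν0 : (μ.withDensity fun x => ENNReal.ofReal (φ x ^ 2))
            {x | y < ‖hat f x‖ / φ x} = 0 :=
          (withDensity_absolutelyContinuous μ _)
            (measure_mono_null (subset_univ _) hμ)
        rw [hν0]
        exact zero_le
      · rw [hAtop, ENNReal.mul_top (by simp [hM0]), ENNReal.top_div_of_ne_top hoyt]
        exact le_top
    · set t := (eLpNorm f 1 μY).toReal / y with htdef
      have hae : ∀ᵐ x ∂μ, (‖hat f x‖₊ : ℝ≥0∞) ≤ eLpNorm f 1 μY := by
        filter_upwards [enorm_ae_le_eLpNormEssSup (hat f) μ] with x hx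
        exact hx.trans (by rw [← eLpNorm_exponent_top]; exact hhat1 f)
      have hsub : ∀ᵐ x ∂μ, x ∈ {x | y < ‖hat f x‖ / φ x} → x ∈ {x | φ x < t} := by
        filter_upwards [hae] with x hx hxS
        have h1 : y * φ x < ‖hat f x‖ := (lt_div_iff₀ (hφpos x)).mp hxS
        have h2 : ENNReal.ofReal (y * φ x) < eLpNorm f 1 μY := by
          refine lt_of_lt_of_le ?_ hx
          rw [← enorm_eq_nnnorm, ← ofReal_norm]
          exact (ENNReal.ofReal_lt_ofReal_iff (lt_of_le_of_lt (mul_nonneg hy.le (hφpos x).le) h1)).mpr h1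
        have h3 : y * φ x < (eLpNorm f 1 μY).toReal :=
          (ENNReal.ofReal_lt_iff_lt_toReal (mul_nonneg hy.le (hφpos x).le) hAtop).mp h2
        show φ x < t
        rw [htdef, lt_div_iff₀ hy]
        linarith
      have hmono : (μ.withDensity fun x => ENNReal.ofReal (φ x ^ 2))
            {x | y < ‖hat f x‖ / φ x}
          ≤ (μ.withDensity fun x => ENNReal.ofReal (φ x ^ 2)) {x | φ x < t} :=
        measure_mono_ae
          (hsub.filter_mono (withDensity_absolutelyContinuous μ _).ae_le)
      refine hmono.trans ((paley_aux μ φ hφm hφpos Mφ hMφ t).trans ?_)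
      rw [htdef, ENNReal.ofReal_div_of_pos hy, ENNReal.ofReal_toReal hAtop,
        mul_div_assoc]
end

section
/- Spectral multiplier norm computation for measurable functions: Let (X, μ) be a σ-finite measure space, L : X → [0,∞) measurable, and φ : [0,∞) → [0,1] continuous, strictly decreasing, with φ(0) = 1 and φ(u) → 0 as u → ∞. Define g = φ ∘ L. Then for every r ∈ [1,∞), sup_{t>0} t^{1/r} g*(t) = sup_{u>0} φ(u) · ( μ{x : L(x) < u} )^{1/r}, where g* is the decreasing rearrangement of g. -/
open MeasureTheory Set Filter
open scoped ENNReal Topology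

/-- The distribution function of `g`. -/
noncomputable def distFun {α : Type*} [MeasurableSpace α] (μ : Measure α)
    (g : α → ℝ) (s : ℝ≥0∞) : ℝ≥0∞ :=
  μ {x | s < ENNReal.ofReal |g x|}

/-- The decreasing rearrangement `g*` of `g`. -/
noncomputable def decRearr {α : Type*} [MeasurableSpace α] (μ : Measure α)
    (g : α → ℝ) (t : ℝ≥0∞) : ℝ≥0∞ :=
  sInf {s : ℝ≥0∞ | distFun μ g s ≤ t}

/-- Spectral multiplier norm computation for measurable functions: for `L : X → [0,∞)`
measurable and `φ : [0,∞) → [0,1]` continuous, strictly decreasing, with `φ(0) = 1` and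
`φ(u) → 0` as `u → ∞`, setting `g = φ ∘ L`, for every `r ∈ [1,∞)`:
`sup_{t>0} t^{1/r} g*(t) = sup_{u>0} φ(u) (μ{L < u})^{1/r}`, in `[0,∞]`. -/
theorem stmt_19 {X : Type*} [MeasurableSpace X] (μ : Measure X) [SigmaFinite μ]
    (L : X → ℝ) (hL : Measurable L) (hL0 : ∀ x, 0 ≤ L x)
    (φ : ℝ → ℝ) (hφcont : ContinuousOn φ (Ici 0))
    (hφanti : StrictAntiOn φ (Ici 0))
    (hφ01 : ∀ u : ℝ, 0 ≤ u → φ u ∈ Icc (0:ℝ) 1)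
    (hφ0 : φ 0 = 1) (hphiTop : Tendsto φ atTop (𝓝 0))
    (r : ℝ) (hr : 1 ≤ r) :
    (⨆ t ∈ Ioi (0:ℝ),
        ENNReal.ofReal t ^ (1/r) * decRearr μ (fun x => φ (L x)) (ENNReal.ofReal t)) =
      ⨆ u ∈ Ioi (0:ℝ), ENNReal.ofReal (φ u) * μ {x | L x < u} ^ (1/r) := by
  have hr0 : (0:ℝ) < r := lt_of_lt_of_le one_pos hr
  have hrinv : (0:ℝ) < 1 / r := by positivity
  set g : X → ℝ := fun x => φ (L x) with hgdef
  -- positivity of φ on [0,∞)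
  have hφpos : ∀ u : ℝ, 0 ≤ u → 0 < φ u := by
    intro u hu
    rcases ((hφ01 u hu).1).lt_or_eq with h | h
    · exact h
    · exfalso
      have h1 : φ (u + 1) < φ u :=
        hφanti hu (by simp only [mem_Ici]; linarith) (lt_add_one u)
      have h2 := (hφ01 (u + 1) (by linarith)).1
      linarith
  have habs : ∀ x, |g x| = g x := fun x => abs_of_nonneg (hφ01 _ (hL0 x)).1
  -- the distribution function is antitone
  have hdant : ∀ s₁ s₂ : ℝ≥0∞, s₁ ≤ s₂ → distFun μ g s₂ ≤ distFun μ g s₁ := by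
    intro s₁ s₂ h
    exact measure_mono fun x hx => lt_of_le_of_lt h hx
  -- key identity : distFun at ofReal (φ u) is μ {L < u}
  have hF1 : ∀ u : ℝ, 0 ≤ u →
      distFun μ g (ENNReal.ofReal (φ u)) = μ {x | L x < u} := by
    intro u hu
    unfold distFun
    congr 1
    ext x
    simp only [mem_setOf_eq, habs x]
    rw [ENNReal.ofReal_lt_ofReal_iff (hφpos _ (hL0 x))]
    constructor
    · intro h
      by_contra hlt
      push_neg at hlt
      have := hφanti.le_iff_ge (mem_Ici.2 (hL0 x)) (mem_Ici.2 hu)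
      exact absurd (this.2 hlt) (not_le.2 h)
    · intro h
      exact hφanti (mem_Ici.2 (hL0 x)) (mem_Ici.2 hu) h
  -- distFun vanishes at 1
  have hd1 : distFun μ g 1 = 0 := by
    unfold distFun
    have hset : {x | (1:ℝ≥0∞) < ENNReal.ofReal |g x|} = ∅ := by
      ext x
      simp only [mem_setOf_eq, mem_empty_iff_false, iff_false, not_lt, habs x]
      exact ENNReal.ofReal_le_one.2 (hφ01 _ (hL0 x)).2
    rw [hset, measure_empty]
  -- decRearr is bounded by 1
  have hG1 : ∀ t : ℝ≥0∞, decRearr μ g t ≤ 1 := by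
    intro t
    exact sInf_le (by simp [hd1])
  -- surjectivity of φ onto (0,1)
  have hsurj : ∀ c : ℝ, 0 < c → c < 1 → ∃ u : ℝ, 0 < u ∧ φ u = c := by
    intro c hc hc1
    obtain ⟨N, hN⟩ := (hphiTop.eventually (eventually_lt_nhds hc)).exists_forall_of_atTop
    have hN' : φ (max N 1) < c := hN _ (le_max_left _ _)
    have h01 : (0:ℝ) ≤ max N 1 := le_trans zero_le_one (le_max_right _ _)
    have hmem : c ∈ Icc (φ (max N 1)) (φ 0) := ⟨hN'.le, by rw [hφ0]; exact hc1.le⟩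
    obtain ⟨u, hu, hphiu⟩ :=
      intermediate_value_Icc' h01 (hφcont.mono (Icc_subset_Ici_self)) hmem
    refine ⟨u, ?_, hphiu⟩
    rcases hu.1.lt_or_eq with h | h
    · exact h
    · exfalso; rw [← h, hφ0] at hphiu; linarith
  apply le_antisymm
  · -- LHS ≤ RHS
    refine iSup₂_le fun t ht => ?_
    refine le_of_forall_lt_imp_le_of_dense fun c hc => ?_
    -- c < ofReal t ^ (1/r) * G
    set a : ℝ≥0∞ := ENNReal.ofReal t ^ (1/r) with hadef
    have ha_ne_top : a ≠ ∞ :=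
      ENNReal.rpow_ne_top_of_nonneg hrinv.le ENNReal.ofReal_ne_top
    have ha_ne_zero : a ≠ 0 := by
      intro h
      rw [h] at hc
      exact absurd hc (by simp)
    have hcfin : c ≠ ∞ := fun h => by
      rw [h] at hc
      exact absurd hc (not_lt.2 le_top)
    -- pick b with c / a < b < G
    have hdiv : c / a < decRearr μ g (ENNReal.ofReal t) := by
      rw [ENNReal.div_lt_iff (Or.inl ha_ne_zero) (Or.inl ha_ne_top)]
      rwa [mul_comm] at hc
    obtain ⟨b, hb1, hb2⟩ := exists_between hdiv
    have hb0 : 0 < b := lt_of_le_of_lt zero_le hb1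
    have hblt1 : b < 1 := lt_of_lt_of_le hb2 (hG1 _)
    have hbfin : b ≠ ∞ := (lt_of_lt_of_le hblt1 le_top).ne
    set cb : ℝ := b.toReal with hcbdef
    have hcb0 : 0 < cb := ENNReal.toReal_pos hb0.ne' hbfin
    have hcb1 : cb < 1 := by
      rw [hcbdef, ← ENNReal.toReal_one]
      exact ENNReal.toReal_strict_mono (by simp) hblt1
    obtain ⟨u, hu0, hphiu⟩ := hsurj cb hcb0 hcb1
    have hbeq : b = ENNReal.ofReal (φ u) := by
      rw [hphiu, hcbdef, ENNReal.ofReal_toReal hbfin]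
    -- b < G means distFun at b is > ofReal t
    have hdb : ENNReal.ofReal t < distFun μ g b := by
      by_contra h
      push_neg at h
      exact absurd (sInf_le (mem_setOf_eq ▸ h)) (not_le.2 hb2)
    rw [hbeq, hF1 u hu0.le] at hdb
    -- conclude
    have key : c ≤ ENNReal.ofReal (φ u) * μ {x | L x < u} ^ (1/r) := by
      calc c = c / a * a := (ENNReal.div_mul_cancel ha_ne_zero ha_ne_top).symm
        _ ≤ b * a := mul_le_mul_left hb1.le a
        _ = ENNReal.ofReal (φ u) * ENNReal.ofReal t ^ (1/r) := by rw [hbeq, hadef]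
        _ ≤ ENNReal.ofReal (φ u) * μ {x | L x < u} ^ (1/r) :=
            mul_le_mul_right (ENNReal.rpow_le_rpow hdb.le hrinv.le) _
    exact key.trans (le_iSup₂ (f := fun u (_ : u ∈ Ioi (0:ℝ)) =>
      ENNReal.ofReal (φ u) * μ {x | L x < u} ^ (1/r)) u hu0)
  · -- RHS ≤ LHS
    refine iSup₂_le fun u hu => ?_
    have hu0 : (0:ℝ) < u := hu
    set s : ℝ≥0∞ := ENNReal.ofReal (φ u) with hsdef
    have hs0 : s ≠ 0 := by
      simp [hsdef, ENNReal.ofReal_pos.2 (hφpos u hu0.le), ne_of_gt]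
    have hsfin : s ≠ ∞ := ENNReal.ofReal_ne_top
    set D : ℝ≥0∞ := μ {x | L x < u} with hDdef
    rcases eq_or_ne D 0 with hD0 | hD0
    · rw [hD0, ENNReal.zero_rpow_of_pos hrinv, mul_zero]
      exact zero_le
    refine le_of_forall_lt_imp_le_of_dense fun c hc => ?_
    have hcfin : c ≠ ∞ := fun h => by
      rw [h] at hc; exact absurd hc (not_lt.2 le_top)
    have hdiv : c / s < D ^ (1/r) := by
      rw [ENNReal.div_lt_iff (Or.inl hs0) (Or.inl hsfin)]
      rwa [mul_comm] at hc
    have hpow : (c / s) ^ r < D := by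
      have h1 : (c / s) ^ r < (D ^ (1/r)) ^ r := ENNReal.rpow_lt_rpow hdiv hr0
      rwa [← ENNReal.rpow_mul, one_div, inv_mul_cancel₀ hr0.ne', ENNReal.rpow_one] at h1
    obtain ⟨m, hm1, hm2⟩ := exists_between hpow
    have hmfin : m ≠ ∞ := fun h => absurd hm2 (by rw [h]; exact not_lt.2 le_top)
    have hm0 : 0 < m := lt_of_le_of_lt zero_le hm1
    set t : ℝ := m.toReal with htdef
    have ht0 : 0 < t := ENNReal.toReal_pos hm0.ne' hmfin
    have hofm : ENNReal.ofReal t = m := ENNReal.ofReal_toReal hmfin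
    -- decRearr at ofReal t is at least s
    have hGs : s ≤ decRearr μ g (ENNReal.ofReal t) := by
      refine le_sInf fun s' hs' => ?_
      by_contra h
      push_neg at h
      have h1 : distFun μ g s ≤ distFun μ g s' := hdant s' s h.le
      rw [hF1 u hu0.le] at h1
      have h2 : distFun μ g s' ≤ ENNReal.ofReal t := hs'
      rw [hofm] at h2
      exact absurd (h1.trans h2) (not_le.2 hm2)
    have key : c ≤ ENNReal.ofReal t ^ (1/r) * decRearr μ g (ENNReal.ofReal t) := by
      have hcs : c / s ≤ m ^ (1/r) := by
        have h1 : ((c / s) ^ r) ^ (1/r) ≤ m ^ (1/r) :=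
          ENNReal.rpow_le_rpow hm1.le hrinv.le
        rwa [← ENNReal.rpow_mul, mul_one_div, div_self hr0.ne', ENNReal.rpow_one] at h1
      calc c = c / s * s := (ENNReal.div_mul_cancel hs0 hsfin).symm
        _ ≤ m ^ (1/r) * s := mul_le_mul_left hcs s
        _ = ENNReal.ofReal t ^ (1/r) * s := by rw [hofm]
        _ ≤ ENNReal.ofReal t ^ (1/r) * decRearr μ g (ENNReal.ofReal t) :=
            mul_le_mul_right hGs _
    exact key.trans (le_iSup₂ (f := fun t (_ : t ∈ Ioi (0:ℝ)) =>
      ENNReal.ofReal t ^ (1/r) * decRearr μ g (ENNReal.ofReal t)) t ht0)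
end
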